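/- arXiv:1812.00316 — 6 statements merged into one kernel-verified Lean document; each statement's English description precedes it below -/
import Mathlib

section
/- The Maclaurin coefficients a_n of f_0(z) = exp(z/(1-z)) satisfy the three-term recurrence n·a_n - (2n-1)·a_{n-1} + (n-2)·a_{n-2} = 0 for all n ≥ 2. -/
open FormalMultilinearSeries Filter
open scoped Topology

/-- From pointwise HasSum on the unit disc, build a power series representation. -/
lemma aux_hasFPS {c : ℕ → ℝ} {G : ℝ → ℝ}
    (h : ∀ x : ℝ, |x| < 1 → HasSum (fun n => c n * x ^ n) (G x)) :
    HasFPowerSeriesOnBall G (ofScalars ℝ c) 0 1 := by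
  have hcoeff : ∀ n, (ofScalars ℝ c).coeff n = c n := by
    intro n
    simp [FormalMultilinearSeries.coeff, FormalMultilinearSeries.ofScalars, List.prod_ofFn]
  constructor
  · apply ENNReal.le_of_forall_nnreal_lt
    intro r hr
    have hr1 : (r : ℝ) < 1 := by exact_mod_cast hr
    have hs : Summable (fun n => c n * (r : ℝ) ^ n) :=
      (h r (by rwa [abs_of_nonneg r.coe_nonneg])).summable
    apply FormalMultilinearSeries.le_radius_of_summable
    have : Summable (fun n => |c n * (r : ℝ) ^ n|) := hs.abs
    simpa [FormalMultilinearSeries.ofScalars_norm, abs_mul, abs_pow,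
      abs_of_nonneg r.coe_nonneg, hcoeff] using this
  · exact one_pos
  · intro y hy
    have hy' : |y| < 1 := by
      have := mem_emetric_ball_zero_iff.mp hy
      rw [← ofReal_norm_eq_enorm, ENNReal.ofReal_lt_one, Real.norm_eq_abs] at this
      exact this
    simpa [FormalMultilinearSeries.ofScalars_apply_eq, smul_eq_mul, hcoeff, mul_comm]
      using h y hy'

/-- If a power series sums to 0 on the punctured unit disc, its coefficients vanish. -/
lemma aux_zero {c : ℕ → ℝ}
    (h : ∀ x : ℝ, 0 < |x| → |x| < 1 → HasSum (fun n => c n * x ^ n) 0) :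
    ∀ n, c n = 0 := by
  set p := ofScalars ℝ c with hp
  have hcoeff : ∀ n, ‖ofScalars ℝ c n‖ = |c n| := fun n => by
    rw [FormalMultilinearSeries.ofScalars_norm]; rfl
  have hrad : 1 ≤ p.radius := by
    apply ENNReal.le_of_forall_nnreal_lt
    intro r hr
    have hr1 : (r : ℝ) < 1 := by exact_mod_cast hr
    rcases eq_or_lt_of_le r.coe_nonneg with h0 | h0
    · rw [show r = 0 by exact_mod_cast h0.symm]
      simp
    have hs : Summable (fun n => c n * (r : ℝ) ^ n) :=
      (h r (by rwa [abs_of_pos h0]) (by rwa [abs_of_pos h0])).summable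
    apply FormalMultilinearSeries.le_radius_of_summable
    have : Summable (fun n => |c n * (r : ℝ) ^ n|) := hs.abs
    simpa [abs_mul, abs_pow, abs_of_nonneg r.coe_nonneg, hcoeff, hp, coeff_ofScalars] using this
  have hball : HasFPowerSeriesOnBall p.sum p 0 1 :=
    (p.hasFPowerSeriesOnBall (lt_of_lt_of_le one_pos hrad)).mono one_pos hrad
  have hsum_eq : ∀ x : ℝ, 0 < |x| → |x| < 1 → p.sum x = 0 := by
    intro x h0 h1
    have := (h x h0 h1).tsum_eq
    rw [FormalMultilinearSeries.sum, ← this]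
    exact tsum_congr fun n => by
      rw [FormalMultilinearSeries.ofScalars_apply_eq]; rw [smul_eq_mul]
  have hcont : ContinuousAt p.sum 0 := hball.analyticAt.continuousAt
  have hev : ∀ᶠ x : ℝ in 𝓝[≠] 0, p.sum x = 0 := by
    have hb : ∀ᶠ x : ℝ in 𝓝 (0:ℝ), |x| < 1 := by
      filter_upwards [Metric.ball_mem_nhds (0:ℝ) one_pos] with x hx
      simpa [Real.dist_eq] using hx
    filter_upwards [hb.filter_mono nhdsWithin_le_nhds, self_mem_nhdsWithin] with x hx hx0
    exact hsum_eq x (abs_pos.mpr hx0) hx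
  have h0 : p.sum 0 = 0 := by
    have t1 : Filter.Tendsto p.sum (𝓝[≠] (0:ℝ)) (𝓝 (p.sum 0)) :=
      hcont.tendsto.mono_left nhdsWithin_le_nhds
    have t2 : Filter.Tendsto p.sum (𝓝[≠] (0:ℝ)) (𝓝 0) :=
      Filter.Tendsto.congr' (Filter.EventuallyEq.symm hev) tendsto_const_nhds
    exact tendsto_nhds_unique t1 t2
  have hzero : HasFPowerSeriesOnBall (fun _ : ℝ => (0:ℝ)) p 0 1 := by
    apply hball.congr
    intro x hx
    have hx' : |x| < 1 := by
      have := mem_emetric_ball_zero_iff.mp hx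
      rw [← ofReal_norm_eq_enorm, ENNReal.ofReal_lt_one, Real.norm_eq_abs] at this
      exact this
    rcases eq_or_ne x 0 with rfl | hne
    · exact h0
    · exact hsum_eq x (abs_pos.mpr hne) hx'
  have hzero' : HasFPowerSeriesOnBall (fun _ : ℝ => (0:ℝ)) (ofScalars ℝ (fun _ => (0:ℝ))) 0 1 := by
    apply aux_hasFPS
    intro x _
    simpa using hasSum_zero
  have heq := hzero.hasFPowerSeriesAt.eq_formalMultilinearSeries hzero'.hasFPowerSeriesAt
  have hc : c = fun _ => 0 := FormalMultilinearSeries.ofScalars_series_injective ℝ ℝ heq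
  exact fun n => congrFun hc n

/-- The Maclaurin coefficients `a n` of `f₀(z) = exp(z/(1-z))` satisfy the
three-term recurrence `n·aₙ - (2n-1)·aₙ₋₁ + (n-2)·aₙ₋₂ = 0` for `n ≥ 2`. -/
theorem stmt_0 (a : ℕ → ℝ)
    (ha : ∀ x : ℝ, |x| < 1 → HasSum (fun n => a n * x ^ n) (Real.exp (x / (1 - x)))) :
    ∀ n : ℕ, 2 ≤ n →
      (n : ℝ) * a n - (2 * n - 1) * a (n - 1) + ((n : ℝ) - 2) * a (n - 2) = 0 := by
  set g : ℝ → ℝ := fun x => Real.exp (x / (1 - x)) with hg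
  have hp : HasFPowerSeriesOnBall g (ofScalars ℝ a) 0 1 := aux_hasFPS ha
  have hd : HasFPowerSeriesOnBall (fderiv ℝ g) (ofScalars ℝ a).derivSeries 0 1 := hp.fderiv
  set c : ℕ → ℝ := fun n =>
    ((n : ℝ) + 1) * a (n + 1) - (2 * n + 1) * a n +
      (if n < 2 then 0 else ((n : ℝ) - 1) * a (n - 1)) with hcdef
  have key : ∀ x : ℝ, 0 < |x| → |x| < 1 → HasSum (fun n => c n * x ^ n) 0 := by
    intro x hx0 hx1
    have hne : x ≠ 0 := abs_pos.mp hx0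
    have hxlt : x < 1 := lt_of_le_of_lt (le_abs_self x) hx1
    have h1x : (1 : ℝ) - x ≠ 0 := sub_ne_zero.mpr (ne_of_lt hxlt).symm
    have hmem : x ∈ Metric.eball (0 : ℝ) 1 := by
      rw [mem_emetric_ball_zero_iff]
      rw [← ofReal_norm_eq_enorm, ENNReal.ofReal_lt_one, Real.norm_eq_abs]
      exact hx1
    -- derivative of g
    have hu : HasDerivAt (fun y : ℝ => y / (1 - y))
        ((1 * (1 - x) - x * (0 - 1)) / (1 - x) ^ 2) x :=
      (hasDerivAt_id x).div ((hasDerivAt_const x (1:ℝ)).sub (hasDerivAt_id x)) h1x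
    have hgderiv : HasDerivAt g
        (Real.exp (x / (1 - x)) * ((1 * (1 - x) - x * (0 - 1)) / (1 - x) ^ 2)) x :=
      by have := (Real.hasDerivAt_exp (x / (1 - x))).comp x hu; exact this
    set D : ℝ := Real.exp (x / (1 - x)) * ((1 * (1 - x) - x * (0 - 1)) / (1 - x) ^ 2) with hD
    -- sum of derivative series
    have hDsum : HasSum (fun n => (ofScalars ℝ a).derivSeries n (fun _ => x))
        (fderiv ℝ g (0 + x)) := hd.hasSum hmem
    have h1 := (ContinuousLinearMap.apply ℝ ℝ (1 : ℝ)).hasSum hDsum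
    have hval : (ContinuousLinearMap.apply ℝ ℝ (1 : ℝ)) (fderiv ℝ g (0 + x)) = D := by
      rw [zero_add]
      show (fderiv ℝ g x : ℝ → ℝ) 1 = D
      rw [fderiv_apply_one_eq_deriv, hgderiv.deriv]
    have hterm : ∀ n : ℕ, (ContinuousLinearMap.apply ℝ ℝ (1 : ℝ))
        ((ofScalars ℝ a).derivSeries n (fun _ => x)) = ((n : ℝ) + 1) * a (n + 1) * x ^ n := by
      intro n
      set L := (ofScalars ℝ a).derivSeries n (fun _ => x) with hL
      have e1 : L x = (n + 1) • (ofScalars ℝ a) (n + 1) (fun _ => x) :=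
        FormalMultilinearSeries.derivSeries_apply_diag _ n x
      have e2 : L x = x * L 1 := by
        conv_lhs => rw [show x = x • (1 : ℝ) by simp]
        rw [map_smul, smul_eq_mul]
      have e3 : (ofScalars ℝ a) (n + 1) (fun _ => x) = a (n + 1) * x ^ (n + 1) := by
        rw [FormalMultilinearSeries.ofScalars_apply_eq, smul_eq_mul]
      show L 1 = ((n : ℝ) + 1) * a (n + 1) * x ^ n
      have : x * L 1 = ((n : ℝ) + 1) * (a (n + 1) * x ^ (n + 1)) := by
        rw [← e2, e1, e3, nsmul_eq_mul]
        push_cast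
        ring
      field_simp at this
      have hx' : L 1 = ((n : ℝ) + 1) * (a (n + 1) * x ^ (n + 1)) / x := by
        field_simp
        linarith [this]
      rw [hx', pow_succ]
      field_simp
    have h1' : HasSum (fun n : ℕ => ((n : ℝ) + 1) * a (n + 1) * x ^ n) D := by
      rw [← hval]
      exact HasSum.congr_fun h1 (fun n : ℕ => (hterm n).symm)
    have hG : HasSum (fun n : ℕ => a n * x ^ n) (Real.exp (x / (1 - x))) := ha x hx1
    set f2 : ℕ → ℝ := fun n => if n = 0 then 0 else -(2 * (n : ℝ)) * a n * x ^ n with hf2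
    have hs2 : HasSum f2 (D * (-(2 * x))) := by
      have h2 := h1'.mul_right (-(2 * x))
      have h2' : HasSum (fun n : ℕ => f2 (n + 1)) (D * (-(2 * x))) := by
        apply HasSum.congr_fun h2
        intro n
        simp only [hf2, if_neg (Nat.succ_ne_zero n)]
        push_cast
        ring
      have := (hasSum_nat_add_iff 1).mp h2'
      simpa [hf2] using this
    set f3 : ℕ → ℝ := fun n => if n < 2 then 0 else ((n : ℝ) - 1) * a (n - 1) * x ^ n with hf3
    have hs3 : HasSum f3 (D * x ^ 2) := by
      have h3 := h1'.mul_right (x ^ 2)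
      have h3' : HasSum (fun n : ℕ => f3 (n + 2)) (D * x ^ 2) := by
        apply HasSum.congr_fun h3
        intro n
        simp only [hf3, if_neg (by omega : ¬ n + 2 < 2), Nat.add_sub_cancel]
        push_cast
        ring
      have := (hasSum_nat_add_iff 2).mp h3'
      simpa [hf3, Finset.sum_range_succ] using this
    have htot : HasSum
        (fun n : ℕ => (((n : ℝ) + 1) * a (n + 1) * x ^ n + f2 n + f3 n) - a n * x ^ n)
        ((D + D * (-(2 * x)) + D * x ^ 2) - Real.exp (x / (1 - x))) :=
      ((h1'.add hs2).add hs3).sub hG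
    have hS0 : (D + D * (-(2 * x)) + D * x ^ 2) - Real.exp (x / (1 - x)) = 0 := by
      rw [hD]
      field_simp
      ring
    rw [hS0] at htot
    apply HasSum.congr_fun htot
    intro n
    match n with
    | 0 => simp [hcdef, hf2, hf3]
    | 1 => simp [hcdef, hf2, hf3]; ring
    | (k + 2) =>
      simp only [hcdef, hf2, hf3, if_neg (by omega : ¬ k + 2 < 2),
        if_neg (Nat.succ_ne_zero _), Nat.add_sub_cancel]
      push_cast
      ring
  have hc := aux_zero key
  intro n hn
  obtain ⟨m, rfl⟩ := Nat.exists_eq_add_of_le hn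
  have hcm := hc (m + 1)
  simp only [hcdef] at hcm
  have e3 : 2 + m = m + 2 := by omega
  rw [e3]
  have e1 : m + 2 - 1 = m + 1 := by omega
  have e2 : m + 2 - 2 = m := by omega
  rw [e1, e2]
  match m with
  | 0 =>
    rw [if_pos (by omega : (0:ℕ) + 1 < 2)] at hcm
    push_cast at hcm ⊢
    linarith
  | (k + 1) =>
    rw [if_neg (by omega : ¬ k + 1 + 1 < 2), Nat.add_sub_cancel] at hcm
    push_cast at hcm ⊢
    linarith
end

section
/- The coefficients a_n of exp(z/(1-z)) are positive rationals and n!·a_n is a positive integer for all n ≥ 0. -/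
open Finset

/-- Double-index term for `exp(x/(1-x)) = ∑_k (1/k!) (x/(1-x))^k`. -/
noncomputable def Fterm (x : ℝ) (p : ℕ × ℕ) : ℝ :=
  ((p.1.factorial : ℝ))⁻¹ * (Nat.choose (p.2 + p.1 - 1) p.2) * x ^ (p.1 + p.2)

/-- Candidate Maclaurin coefficients. -/
noncomputable def bcoef (n : ℕ) : ℝ :=
  ∑ p ∈ Finset.HasAntidiagonal.antidiagonal n, ((p.1.factorial : ℝ))⁻¹ * (Nat.choose (p.2 + p.1 - 1) p.2)

/-- The rational version of the coefficients. -/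
def qcoef (n : ℕ) : ℚ :=
  ∑ p ∈ Finset.HasAntidiagonal.antidiagonal n, ((p.1.factorial : ℚ))⁻¹ * (Nat.choose (p.2 + p.1 - 1) p.2)

lemma hasSum_exp_aux (y : ℝ) :
    HasSum (fun k => ((k.factorial : ℝ))⁻¹ * y ^ k) (Real.exp y) := by
  have h := NormedSpace.expSeries_div_hasSum_exp y
  rw [← Real.exp_eq_exp_ℝ] at h
  simpa only [div_eq_mul_inv, mul_comm] using h

lemma hasSum_fiber {x : ℝ} (hx : |x| < 1) (k : ℕ) :
    HasSum (fun m => Fterm x (k, m)) (((k.factorial : ℝ))⁻¹ * (x / (1 - x)) ^ k) := by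
  have hx1 : (1 : ℝ) - x ≠ 0 := by
    have := abs_lt.mp hx
    intro h; linarith [this.2]
  cases k with
  | zero =>
      have : HasSum (fun m => Fterm x (0, m)) (Fterm x (0, 0)) := by
        apply hasSum_single 0
        intro m hm
        have : Nat.choose (m - 1) m = 0 := by
          apply Nat.choose_eq_zero_of_lt
          omega
        simp [Fterm, this]
      simpa [Fterm] using this
  | succ j =>
      have h1 := hasSum_choose_mul_geometric_of_norm_lt_one (𝕜 := ℝ) j
        (by rwa [Real.norm_eq_abs])
      have h2 := h1.mul_left ((((j + 1).factorial : ℝ))⁻¹ * x ^ (j + 1))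
      have heq : (fun m => (((j + 1).factorial : ℝ))⁻¹ * x ^ (j + 1) *
          (((m + j).choose j : ℝ) * x ^ m)) = fun m => Fterm x (j + 1, m) := by
        funext m
        have hc : (m + j).choose j = Nat.choose (m + (j + 1) - 1) m := by
          have h' : (m + j).choose ((m + j) - j) = (m + j).choose j :=
            Nat.choose_symm (Nat.le_add_left j m)
          simp only [Nat.add_sub_cancel] at h'
          have : m + (j + 1) - 1 = m + j := by omega
          rw [this, ← h']
        rw [Fterm]
        rw [← hc]
        rw [pow_add]
        ring
      rw [heq] at h2
      convert h2 using 1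
      · rfl
      rw [div_pow, one_div]
      field_simp

lemma summable_Fterm {x : ℝ} (hx : |x| < 1) : Summable (Fterm x) := by
  have habs : ∀ p, |Fterm x p| = Fterm |x| p := by
    intro p
    simp [Fterm, abs_mul, abs_pow, abs_inv, abs_abs]
  have hx' : |(|x|)| < 1 := by rwa [abs_abs]
  rw [← summable_abs_iff]
  simp only [habs]
  rw [summable_prod_of_nonneg (by
    intro p
    have : (0:ℝ) ≤ Fterm |x| p := by
      rw [Fterm]
      positivity
    exact this)]
  constructor
  · intro k
    exact (hasSum_fiber hx' k).summable
  · have : (fun k => ∑' m, Fterm |x| (k, m)) =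
        fun k => ((k.factorial : ℝ))⁻¹ * (|x| / (1 - |x|)) ^ k := by
      funext k
      exact (hasSum_fiber hx' k).tsum_eq
    rw [this]
    exact (hasSum_exp_aux (|x| / (1 - |x|))).summable

lemma hasSum_Fterm {x : ℝ} (hx : |x| < 1) :
    HasSum (Fterm x) (Real.exp (x / (1 - x))) := by
  have hT := (summable_Fterm hx).hasSum
  have h2 : HasSum (fun k => ((k.factorial : ℝ))⁻¹ * (x / (1 - x)) ^ k)
      (∑' p, Fterm x p) := hT.prod_fiberwise (fun k => hasSum_fiber hx k)
  rwa [h2.unique (hasSum_exp_aux (x / (1 - x)))] at hT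

lemma hasSum_bcoef {x : ℝ} (hx : |x| < 1) :
    HasSum (fun n => bcoef n * x ^ n) (Real.exp (x / (1 - x))) := by
  have h := hasSum_Fterm hx
  have h2 : HasSum (Fterm x ∘ Finset.HasAntidiagonal.sigmaAntidiagonalEquivProd)
      (Real.exp (x / (1 - x))) :=
    (Equiv.hasSum_iff _).mpr h
  apply h2.sigma
  intro n
  have h3 : HasSum (fun c : (Finset.HasAntidiagonal.antidiagonal n : Finset (ℕ × ℕ)) => Fterm x c)
      (∑ p ∈ Finset.HasAntidiagonal.antidiagonal n, Fterm x p) := by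
    rw [← Finset.sum_coe_sort]
    exact hasSum_fintype _
  have h4 : ∑ p ∈ Finset.HasAntidiagonal.antidiagonal n, Fterm x p = bcoef n * x ^ n := by
    rw [bcoef, Finset.sum_mul]
    apply Finset.sum_congr rfl
    intro p hp
    have hpn : p.1 + p.2 = n := Finset.HasAntidiagonal.mem_antidiagonal.mp hp
    rw [Fterm, hpn]
  rw [h4] at h3
  convert h3 using 1
  rfl

lemma coeff_zero {c : ℕ → ℝ}
    (h : ∀ x : ℝ, |x| < 1 → HasSum (fun n => c n * x ^ n) 0) (n : ℕ) : c n = 0 := by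
  have hsum := (h (1/2) (by rw [abs_lt]; constructor <;> norm_num)).summable
  have htend : Filter.Tendsto (fun k => |c k * (1/2 : ℝ) ^ k|) Filter.atTop (nhds 0) := by
    have := hsum.tendsto_atTop_zero.abs
    simpa using this
  obtain ⟨M, hM⟩ := htend.bddAbove_range
  rw [mem_upperBounds] at hM
  have hM' : ∀ k, |c k| ≤ M * 2 ^ k := by
    intro k
    have h1 : |c k * (1/2 : ℝ) ^ k| ≤ M := hM _ (Set.mem_range_self k)
    rw [abs_mul, abs_pow] at h1
    have h2 : |(1/2 : ℝ)| ^ k * 2 ^ k = 1 := by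
      rw [← mul_pow, abs_of_nonneg (by norm_num : (0:ℝ) ≤ 1/2)]; norm_num
    calc |c k| = |c k| * (|(1/2 : ℝ)| ^ k * 2 ^ k) := by rw [h2, mul_one]
      _ = (|c k| * |(1/2 : ℝ)| ^ k) * 2 ^ k := by ring
      _ ≤ M * 2 ^ k := by
          apply mul_le_mul_of_nonneg_right h1 (by positivity)
  have hM0 : 0 ≤ M := le_trans (abs_nonneg _) (hM _ (Set.mem_range_self 0))
  induction n using Nat.strong_induction_on with
  | _ n ih =>
  have key : ∀ x : ℝ, 0 < x → x ≤ 1/4 → |c n| ≤ (M * 2 ^ (n + 2)) * x := by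
    intro x hx0 hx4
    have hx1 : |x| < 1 := by rw [abs_of_pos hx0]; linarith
    have h0 := h x hx1
    have hpre : ∑ i ∈ Finset.range n, c i * x ^ i = 0 :=
      Finset.sum_eq_zero fun i hi => by rw [ih i (Finset.mem_range.mp hi), zero_mul]
    have h1 : HasSum (fun m => c (m + n) * x ^ (m + n)) 0 := by
      have := (hasSum_nat_add_iff' (f := fun i => c i * x ^ i) n).mpr h0
      simpa [hpre] using this
    have h2 : HasSum (fun m => c (m + 1 + n) * x ^ (m + 1 + n)) (-(c n * x ^ n)) := by
      have := (hasSum_nat_add_iff' (f := fun m => c (m + n) * x ^ (m + n)) 1).mpr h1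
      simpa using this
    set K := M * 2 ^ n * x ^ n with hK
    have hbd : ∀ m, |c (m + 1 + n) * x ^ (m + 1 + n)| ≤ K * (2 * x) ^ (m + 1) := by
      intro m
      rw [abs_mul, abs_pow, abs_of_pos hx0]
      calc |c (m + 1 + n)| * x ^ (m + 1 + n)
          ≤ (M * 2 ^ (m + 1 + n)) * x ^ (m + 1 + n) := by
            apply mul_le_mul_of_nonneg_right (hM' _) (by positivity)
        _ = K * (2 * x) ^ (m + 1) := by
            rw [hK, pow_add, pow_add, mul_pow]; ring
    have h12 : (0 : ℝ) < 1 - 2 * x := by linarith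
    have hgeo : HasSum (fun m => K * (2 * x) ^ (m + 1)) (K * (2 * x) * (1 - 2 * x)⁻¹) := by
      have hg := (hasSum_geometric_of_lt_one (by linarith : (0:ℝ) ≤ 2 * x)
        (by linarith : 2 * x < 1)).mul_left (K * (2 * x))
      have he : (fun m => K * (2 * x) * (2 * x) ^ m) = fun m => K * (2 * x) ^ (m + 1) := by
        funext m; rw [pow_succ]; ring
      rwa [he] at hg
    have hsn : Summable fun m => |c (m + 1 + n) * x ^ (m + 1 + n)| :=
      Summable.of_nonneg_of_le (fun m => abs_nonneg _) hbd hgeo.summable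
    have h3 : |c n * x ^ n| ≤ K * (2 * x) * (1 - 2 * x)⁻¹ := by
      have e1 : |c n * x ^ n| = |∑' m, c (m + 1 + n) * x ^ (m + 1 + n)| := by
        rw [h2.tsum_eq, abs_neg]
      have e2 : |∑' m, c (m + 1 + n) * x ^ (m + 1 + n)|
          ≤ ∑' m, |c (m + 1 + n) * x ^ (m + 1 + n)| := by
        have e := norm_tsum_le_tsum_norm (f := fun m => c (m + 1 + n) * x ^ (m + 1 + n))
          (by simpa only [Real.norm_eq_abs] using hsn)
        simpa only [Real.norm_eq_abs] using e
      have e3 : ∑' m, |c (m + 1 + n) * x ^ (m + 1 + n)| ≤ ∑' m, K * (2 * x) ^ (m + 1) :=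
        Summable.tsum_le_tsum hbd hsn hgeo.summable
      rw [e1]
      calc _ ≤ _ := e2
        _ ≤ _ := e3
        _ = _ := hgeo.tsum_eq
    have hK0 : 0 ≤ K := by rw [hK]; positivity
    have hfrac : 2 * x * (1 - 2 * x)⁻¹ ≤ 4 * x := by
      rw [← div_eq_mul_inv, div_le_iff₀ h12]
      nlinarith
    have h4 : |c n * x ^ n| ≤ K * (4 * x) := by
      calc |c n * x ^ n| ≤ K * (2 * x) * (1 - 2 * x)⁻¹ := h3
        _ = K * (2 * x * (1 - 2 * x)⁻¹) := by ring
        _ ≤ K * (4 * x) := mul_le_mul_of_nonneg_left hfrac hK0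
    rw [abs_mul, abs_pow, abs_of_pos hx0] at h4
    have hxn : (0 : ℝ) < x ^ n := pow_pos hx0 n
    refine le_of_mul_le_mul_right ?_ hxn
    calc |c n| * x ^ n ≤ K * (4 * x) := h4
      _ = (M * 2 ^ (n + 2)) * x * x ^ n := by
          rw [hK, pow_add]; ring
  by_contra hc
  have hcpos : 0 < |c n| := abs_pos.mpr hc
  set C := M * 2 ^ (n + 2) with hC
  have hC0 : 0 ≤ C := by rw [hC]; positivity
  set x := min (1/4 : ℝ) (|c n| / (2 * C + 1)) with hxdef
  have hx0 : 0 < x := lt_min (by norm_num) (div_pos hcpos (by positivity))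
  have h1 := key x hx0 (min_le_left _ _)
  have h2 : C * x ≤ C * (|c n| / (2 * C + 1)) :=
    mul_le_mul_of_nonneg_left (min_le_right _ _) hC0
  have h3 : C * (|c n| / (2 * C + 1)) < |c n| := by
    rw [← mul_div_assoc, div_lt_iff₀ (by positivity : (0:ℝ) < 2 * C + 1)]
    nlinarith
  linarith

lemma bcoef_eq_qcoef (n : ℕ) : ((qcoef n : ℚ) : ℝ) = bcoef n := by
  rw [qcoef, bcoef]
  push_cast
  rfl

lemma qcoef_pos (n : ℕ) : 0 < qcoef n := by
  rw [qcoef]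
  apply Finset.sum_pos'
  · intro p _
    positivity
  · refine ⟨(n, 0), ?_, ?_⟩
    · simp [Finset.mem_antidiagonal]
    · simp only [Nat.choose_zero_right]
      positivity

lemma factorial_mul_bcoef (n : ℕ) :
    (n.factorial : ℝ) * bcoef n =
      ((∑ p ∈ Finset.HasAntidiagonal.antidiagonal n,
        Nat.choose (p.2 + p.1 - 1) p.2 * (n.factorial / p.1.factorial) : ℕ) : ℝ) := by
  rw [bcoef, Finset.mul_sum, Nat.cast_sum]
  apply Finset.sum_congr rfl
  intro p hp
  have hpn : p.1 + p.2 = n := Finset.HasAntidiagonal.mem_antidiagonal.mp hp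
  have hk : p.1 ≤ n := by omega
  have hdvd : p.1.factorial ∣ n.factorial := Nat.factorial_dvd_factorial hk
  rw [Nat.cast_mul, Nat.cast_div hdvd (Nat.cast_ne_zero.mpr p.1.factorial_ne_zero)]
  rw [div_eq_mul_inv]
  ring

lemma nat_sum_pos (n : ℕ) :
    0 < ∑ p ∈ Finset.HasAntidiagonal.antidiagonal n,
      Nat.choose (p.2 + p.1 - 1) p.2 * (n.factorial / p.1.factorial) := by
  apply Finset.sum_pos'
  · intro p _; exact Nat.zero_le _
  · refine ⟨(n, 0), ?_, ?_⟩
    · simp [Finset.mem_antidiagonal]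
    · simp [Nat.div_self n.factorial_pos]

/-- The Maclaurin coefficients `a n` of `exp(z/(1-z))` are positive rationals,
and `n!·aₙ` is a positive integer, for all `n ≥ 0`. -/
theorem stmt_3 (a : ℕ → ℝ)
    (ha : ∀ x : ℝ, |x| < 1 → HasSum (fun n => a n * x ^ n) (Real.exp (x / (1 - x)))) :
    ∀ n : ℕ, (∃ q : ℚ, 0 < q ∧ a n = (q : ℝ)) ∧
      ∃ m : ℕ, 0 < m ∧ (n.factorial : ℝ) * a n = (m : ℝ) := by
  have hab : ∀ n, a n = bcoef n := by
    intro n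
    have h0 : ∀ x : ℝ, |x| < 1 → HasSum (fun n => (a n - bcoef n) * x ^ n) 0 := by
      intro x hx
      have := (ha x hx).sub (hasSum_bcoef hx)
      simpa [sub_mul] using this
    have := coeff_zero h0 n
    linarith
  intro n
  constructor
  · exact ⟨qcoef n, qcoef_pos n, by rw [hab n, bcoef_eq_qcoef]⟩
  · refine ⟨∑ p ∈ Finset.HasAntidiagonal.antidiagonal n,
      Nat.choose (p.2 + p.1 - 1) p.2 * (n.factorial / p.1.factorial),
      nat_sum_pos n, ?_⟩
    rw [hab n, factorial_mul_bcoef]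
end

section
/- For n ≥ 1, a_n = e^{-1} M(n+1, 2, 1), where M is Kummer's confluent hypergeometric function; that is, the n-th Maclaurin coefficient of exp(z/(1-z)) equals e^{-1} ∑_{k≥0} (n+1)_k / ((2)_k k!). -/
open Finset

/-- Negative binomial series. -/
private lemma negbinom (m : ℕ) : ∀ x : ℝ, |x| < 1 →
    HasSum (fun n : ℕ => ((n + m).choose n : ℝ) * x ^ n) ((1 - x)⁻¹ ^ (m + 1)) := by
  induction m with
  | zero =>
    intro x hx
    simpa using hasSum_geometric_of_norm_lt_one (show ‖x‖ < 1 by rwa [Real.norm_eq_abs])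
  | succ m ih =>
    intro x hx
    have hx' : |‖x‖| < 1 := by simpa [Real.norm_eq_abs, abs_abs] using hx
    have hg : HasSum (fun n : ℕ => x ^ n) (1 - x)⁻¹ :=
      hasSum_geometric_of_norm_lt_one (show ‖x‖ < 1 by rwa [Real.norm_eq_abs])
    have hfn : Summable fun n : ℕ => ‖((n + m).choose n : ℝ) * x ^ n‖ := by
      refine (ih ‖x‖ hx').summable.congr fun n => ?_
      rw [norm_mul, norm_pow, Real.norm_eq_abs ((n + m).choose n : ℝ), Nat.abs_cast]
    have hgn : Summable fun n : ℕ => ‖x ^ n‖ := by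
      refine (summable_geometric_of_norm_lt_one
        (show ‖‖x‖‖ < 1 by simpa [Real.norm_eq_abs, abs_abs] using hx)).congr fun n => ?_
      rw [norm_pow]
    have key := hasSum_sum_range_mul_of_summable_norm hfn hgn
    rw [hg.tsum_eq, (ih x hx).tsum_eq] at key
    have hfun : (fun n : ℕ => ∑ k ∈ Finset.range (n + 1),
        ((k + m).choose k : ℝ) * x ^ k * x ^ (n - k))
        = fun n : ℕ => ((n + (m + 1)).choose n : ℝ) * x ^ n := by
      funext n
      calc ∑ k ∈ Finset.range (n + 1), ((k + m).choose k : ℝ) * x ^ k * x ^ (n - k)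
          = ∑ k ∈ Finset.range (n + 1), ((k + m).choose k : ℝ) * x ^ n := by
            refine Finset.sum_congr rfl fun k hk => ?_
            rw [mul_assoc, ← pow_add, Nat.add_sub_cancel' (Finset.mem_range_succ_iff.mp hk)]
        _ = ((∑ k ∈ Finset.range (n + 1), (k + m).choose k : ℕ) : ℝ) * x ^ n := by
            rw [Nat.cast_sum, Finset.sum_mul]
        _ = ((n + (m + 1)).choose n : ℝ) * x ^ n := by
            congr 2
            calc ∑ k ∈ Finset.range (n + 1), (k + m).choose k
                = ∑ k ∈ Finset.range (n + 1), (k + m).choose m :=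
                  Finset.sum_congr rfl fun k _ => Nat.choose_symm_add
              _ = (n + m + 1).choose (m + 1) := Nat.sum_range_add_choose n m
              _ = (n + (m + 1)).choose (m + 1) := by rw [Nat.add_assoc]
              _ = (n + (m + 1)).choose n := Nat.choose_symm_add.symm
    rw [hfun, ← pow_succ] at key
    exact key

private lemma hasFPS (c : ℕ → ℝ) (f : ℝ → ℝ)
    (h : ∀ x : ℝ, |x| < 1 → HasSum (fun n => c n * x ^ n) (f x)) :
    HasFPowerSeriesOnBall f (FormalMultilinearSeries.ofScalars ℝ c) 0 1 where
  r_le := by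
    refine ENNReal.le_of_forall_nnreal_lt fun r hr => ?_
    have hr1 : |(r : ℝ)| < 1 := by
      rw [abs_of_nonneg r.coe_nonneg]
      exact_mod_cast hr
    have htend := ((h r hr1).summable.tendsto_atTop_zero).abs
    obtain ⟨C, hC⟩ := htend.bddAbove_range
    refine FormalMultilinearSeries.le_radius_of_bound _ C fun n => ?_
    have hmem := hC (Set.mem_range_self n)
    rw [FormalMultilinearSeries.ofScalars_norm]
    calc ‖c n‖ * (r : ℝ) ^ n = |c n * (r : ℝ) ^ n| := by
          rw [abs_mul, abs_pow, abs_of_nonneg r.coe_nonneg, Real.norm_eq_abs]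
      _ ≤ C := hmem
  r_pos := one_pos
  hasSum := by
    intro y hy
    have hy1 : |y| < 1 := by
      rw [EMetric.mem_ball, edist_dist, Real.dist_eq, sub_zero] at hy
      exact ENNReal.ofReal_lt_one.mp hy
    have := h y hy1
    simp only [FormalMultilinearSeries.ofScalars_apply_eq, smul_eq_mul, zero_add]
    exact this

private lemma coeff_unique {c d : ℕ → ℝ} {f : ℝ → ℝ}
    (hc : ∀ x : ℝ, |x| < 1 → HasSum (fun n => c n * x ^ n) (f x))
    (hd : ∀ x : ℝ, |x| < 1 → HasSum (fun n => d n * x ^ n) (f x)) : c = d :=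
  FormalMultilinearSeries.ofScalars_series_injective ℝ ℝ
    ((hasFPS c f hc).hasFPowerSeriesAt.eq_formalMultilinearSeries
      (hasFPS d f hd).hasFPowerSeriesAt)

private lemma hshift (z : ℝ) :
    HasSum (fun k : ℕ => z ^ (k + 1) / ((k + 1).factorial : ℝ)) (Real.exp z - 1) := by
  have hexp : HasSum (fun k : ℕ => z ^ k / (k.factorial : ℝ)) (Real.exp z) := by
    rw [Real.exp_eq_exp_ℝ]
    exact NormedSpace.expSeries_div_hasSum_exp z
  refine (hasSum_nat_add_iff (f := fun k : ℕ => z ^ k / (k.factorial : ℝ)) 1).mpr ?_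
  simpa using hexp

private lemma summable_F (x : ℝ) (hx : |x| < 1) :
    Summable (fun p : ℕ × ℕ =>
      ((p.2 + p.1).choose p.2 : ℝ) * x ^ p.2 / ((p.1 + 1).factorial : ℝ)) := by
  have hy : |(|x|)| < 1 := by rwa [abs_abs]
  have hFfiber : ∀ k : ℕ, HasSum
      (fun n : ℕ => ((n + k).choose n : ℝ) * |x| ^ n / ((k + 1).factorial : ℝ))
      ((1 - |x|)⁻¹ ^ (k + 1) / ((k + 1).factorial : ℝ)) := fun k =>
    (negbinom k |x| hy).div_const _
  have hFsum : Summable (fun p : ℕ × ℕ =>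
      ((p.2 + p.1).choose p.2 : ℝ) * |x| ^ p.2 / ((p.1 + 1).factorial : ℝ)) := by
    refine (summable_prod_of_nonneg ?_).mpr ⟨fun k => (hFfiber k).summable, ?_⟩
    · intro p
      positivity
    · have hsum2 : Summable fun k : ℕ =>
          (1 - |x|)⁻¹ ^ (k + 1) / ((k + 1).factorial : ℝ) :=
        (Real.summable_pow_div_factorial (1 - |x|)⁻¹).comp_injective (add_left_injective 1)
      exact hsum2.congr fun k => ((hFfiber k).tsum_eq).symm
  refine Summable.of_abs (hFsum.congr fun p => ?_)
  rw [abs_div, abs_mul, abs_pow, Nat.abs_cast, Nat.abs_cast]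

set_option maxHeartbeats 1000000 in
private lemma hasSum_t (x : ℝ) (hx : |x| < 1) :
    HasSum (fun n : ℕ =>
        (∑' k : ℕ, ((n + k).choose n : ℝ) / ((k + 1).factorial : ℝ)) * x ^ n)
      (Real.exp ((1 - x)⁻¹) - 1) := by
  have hfsum := summable_F x hx
  have hkfiber : ∀ k : ℕ, HasSum
      (fun n : ℕ => ((n + k).choose n : ℝ) * x ^ n / ((k + 1).factorial : ℝ))
      ((1 - x)⁻¹ ^ (k + 1) / ((k + 1).factorial : ℝ)) := fun k =>
    (negbinom k x hx).div_const _
  have hk : HasSum (fun k : ℕ => (1 - x)⁻¹ ^ (k + 1) / ((k + 1).factorial : ℝ))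
      (∑' p : ℕ × ℕ, ((p.2 + p.1).choose p.2 : ℝ) * x ^ p.2 / ((p.1 + 1).factorial : ℝ)) :=
    hfsum.hasSum.prod_fiberwise hkfiber
  have hS : (∑' p : ℕ × ℕ, ((p.2 + p.1).choose p.2 : ℝ) * x ^ p.2 / ((p.1 + 1).factorial : ℝ))
      = Real.exp ((1 - x)⁻¹) - 1 := hk.unique (hshift (1 - x)⁻¹)
  have hswap : HasSum (fun p : ℕ × ℕ =>
        ((p.1 + p.2).choose p.1 : ℝ) * x ^ p.1 / ((p.2 + 1).factorial : ℝ))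
      (∑' p : ℕ × ℕ, ((p.2 + p.1).choose p.2 : ℝ) * x ^ p.2 / ((p.1 + 1).factorial : ℝ)) :=
    ((Equiv.prodComm ℕ ℕ).hasSum_iff).mpr hfsum.hasSum
  have hfib : ∀ n : ℕ, HasSum
      (fun k : ℕ => ((n + k).choose n : ℝ) * x ^ n / ((k + 1).factorial : ℝ))
      ((∑' k : ℕ, ((n + k).choose n : ℝ) / ((k + 1).factorial : ℝ)) * x ^ n) := by
    intro n
    have hinj : Function.Injective fun k : ℕ => ((k, n) : ℕ × ℕ) := fun a b hab => by
      simpa using congrArg Prod.fst hab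
    have h0 := hfsum.comp_injective hinj
    have hsumn : Summable fun k : ℕ =>
        ((n + k).choose n : ℝ) * x ^ n / ((k + 1).factorial : ℝ) := by
      refine h0.congr fun k => ?_
      simp [Function.comp]
    have heq : (fun k : ℕ => ((n + k).choose n : ℝ) * x ^ n / ((k + 1).factorial : ℝ))
        = fun k : ℕ => x ^ n * (((n + k).choose n : ℝ) / ((k + 1).factorial : ℝ)) := by
      funext k
      ring
    rw [heq] at hsumn ⊢
    rw [mul_comm _ (x ^ n), ← tsum_mul_left]
    exact hsumn.hasSum
  have := hswap.prod_fiberwise hfib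
  rwa [hS] at this

/-- For `n ≥ 1`, `aₙ = e⁻¹ M(n+1, 2, 1)`, i.e. the `n`-th Maclaurin coefficient of
`exp(z/(1-z))` equals `e⁻¹ ∑_{k≥0} (n+1)ₖ / ((2)ₖ k!)`, where `(x)ₖ` is the
Pochhammer (ascending factorial) symbol. -/
theorem stmt_4 (a : ℕ → ℝ)
    (ha : ∀ x : ℝ, |x| < 1 → HasSum (fun n => a n * x ^ n) (Real.exp (x / (1 - x)))) :
    ∀ n : ℕ, 1 ≤ n →
      a n = Real.exp (-1) *
        ∑' k : ℕ, (ascPochhammer ℝ k).eval ((n : ℝ) + 1) /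
          ((ascPochhammer ℝ k).eval 2 * (k.factorial : ℝ)) := by
  have hbsum : ∀ x : ℝ, |x| < 1 → HasSum (fun n : ℕ =>
      (Real.exp (-1) * (∑' k : ℕ, ((n + k).choose n : ℝ) / ((k + 1).factorial : ℝ))
        + (if n = 0 then Real.exp (-1) else 0)) * x ^ n)
      (Real.exp (x / (1 - x))) := by
    intro x hx
    have hx1 : x < 1 := (abs_lt.mp hx).2
    have h1x : (1 : ℝ) - x ≠ 0 := by linarith
    have h2 : HasSum (fun n : ℕ => Real.exp (-1) *
        ((∑' k : ℕ, ((n + k).choose n : ℝ) / ((k + 1).factorial : ℝ)) * x ^ n))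
        (Real.exp (-1) * (Real.exp ((1 - x)⁻¹) - 1)) :=
      (hasSum_t x hx).mul_left _
    have h3 : HasSum (fun n : ℕ => (if n = 0 then Real.exp (-1) else 0) * x ^ n)
        (Real.exp (-1)) := by
      have heq : (fun n : ℕ => (if n = 0 then Real.exp (-1) else 0) * x ^ n)
          = fun n : ℕ => if n = 0 then Real.exp (-1) else 0 := by
        funext m
        rcases m with _ | m <;> simp
      rw [heq]
      exact hasSum_ite_eq 0 _
    have hbx : (fun n : ℕ =>
        (Real.exp (-1) * (∑' k : ℕ, ((n + k).choose n : ℝ) / ((k + 1).factorial : ℝ))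
          + (if n = 0 then Real.exp (-1) else 0)) * x ^ n)
        = fun n : ℕ => Real.exp (-1) *
            ((∑' k : ℕ, ((n + k).choose n : ℝ) / ((k + 1).factorial : ℝ)) * x ^ n)
          + (if n = 0 then Real.exp (-1) else 0) * x ^ n := by
      funext m
      ring
    have hval : Real.exp (-1) * (Real.exp ((1 - x)⁻¹) - 1) + Real.exp (-1)
        = Real.exp (x / (1 - x)) := by
      have hz : x / (1 - x) = -1 + (1 - x)⁻¹ := by
        field_simp
        ring
      rw [hz, Real.exp_add]
      ring
    rw [hbx, ← hval]
    exact h2.add h3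
  have hab := coeff_unique ha hbsum
  intro n hn
  have hterm : ∀ k : ℕ, (ascPochhammer ℝ k).eval ((n : ℝ) + 1) /
      ((ascPochhammer ℝ k).eval 2 * (k.factorial : ℝ))
      = ((n + k).choose n : ℝ) / ((k + 1).factorial : ℝ) := by
    intro k
    have hk0 : (k.factorial : ℝ) ≠ 0 := Nat.cast_ne_zero.mpr k.factorial_ne_zero
    have h1 : (ascPochhammer ℝ k).eval ((n : ℝ) + 1)
        = (k.factorial : ℝ) * ((n + k).choose k : ℝ) := by
      rw [show ((n : ℝ) + 1) = (((n + 1 : ℕ) : ℕ) : ℝ) by push_cast; ring,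
        ← ascPochhammer_eval_cast, ascPochhammer_nat_eq_ascFactorial,
        Nat.ascFactorial_eq_factorial_mul_choose]
      push_cast
      ring
    have h2 : (ascPochhammer ℝ k).eval (2 : ℝ) = ((k + 1).factorial : ℝ) := by
      rw [show (2 : ℝ) = (((2 : ℕ) : ℕ) : ℝ) by norm_num, ← ascPochhammer_eval_cast,
        ascPochhammer_nat_eq_ascFactorial]
      norm_cast
      rw [show (2 : ℕ) = 1 + 1 from rfl, Nat.ascFactorial_eq_factorial_mul_choose,
        Nat.add_comm 1 k, Nat.choose_succ_self_right, Nat.factorial_succ]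
      ring
    rw [h1, h2, show (n + k).choose n = (n + k).choose k from Nat.choose_symm_add,
      mul_comm (k.factorial : ℝ) ((n + k).choose k : ℝ)]
    exact mul_div_mul_right _ _ hk0
  have han := congrFun hab n
  rw [han, if_neg (Nat.one_le_iff_ne_zero.mp hn), add_zero]
  congr 1
  exact (tsum_congr hterm).symm
end

section
/- The coefficients b_n of f_1(z) = exp(1/(1-z)) E_1(1/(1-z)) satisfy n·b_n - (2n-1)·b_{n-1} + (n-2)·b_{n-2} = 0 for all n ≥ 3, and 2·b_2 - 3·b_1 + 0·b_0 = 1. -/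
noncomputable def E1 (x : ℝ) : ℝ := ∫ t in Set.Ioi x, Real.exp (-t) / t

open Set MeasureTheory intervalIntegral

lemma E1_integrableOn {a : ℝ} (ha : 0 < a) :
    IntegrableOn (fun t => Real.exp (-t) / t) (Set.Ioi a) := by
  have h1 : IntegrableOn (fun t : ℝ => a⁻¹ * Real.exp (-(1:ℝ) * t)) (Set.Ioi a) :=
    (exp_neg_integrableOn_Ioi a one_pos).const_mul _
  refine Integrable.mono h1 ?_ ?_
  · refine ContinuousOn.aestronglyMeasurable ?_ measurableSet_Ioi
    intro t ht
    exact (Real.continuous_exp.comp continuous_neg).continuousAt.continuousWithinAt.div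
      continuousWithinAt_id (ne_of_gt (ha.trans ht))
  · filter_upwards [ae_restrict_mem measurableSet_Ioi] with t ht
    have ht0 : 0 < t := ha.trans ht
    rw [Real.norm_eq_abs, Real.norm_eq_abs, abs_of_nonneg (by positivity),
      abs_of_nonneg (by positivity)]
    rw [div_eq_mul_inv, neg_one_mul, mul_comm]
    gcongr
    exact ht.le

lemma E1_split {a x : ℝ} (ha : 0 < a) (hax : a ≤ x) :
    E1 x = E1 a - ∫ t in a..x, Real.exp (-t) / t := by
  have h1 : E1 a = (∫ t in Ioc a x, Real.exp (-t) / t) + E1 x := by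
    rw [E1, ← Ioc_union_Ioi_eq_Ioi hax,
      setIntegral_union (Ioc_disjoint_Ioi le_rfl) measurableSet_Ioi
        ((E1_integrableOn ha).mono_set Ioc_subset_Ioi_self)
        ((E1_integrableOn (ha.trans_le hax)))]
    rfl
  rw [intervalIntegral.integral_of_le hax]
  linarith

lemma E1_hasDerivAt {x : ℝ} (hx : 0 < x) :
    HasDerivAt E1 (-(Real.exp (-x) / x)) x := by
  set a := x / 2 with ha_def
  have ha : 0 < a := by positivity
  have hax : a < x := by simp [ha_def]; linarith
  have hcont : ContinuousAt (fun t => Real.exp (-t) / t) x :=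
    ((Real.continuous_exp.comp continuous_neg).continuousAt).div continuousAt_id hx.ne'
  have hint : IntervalIntegrable (fun t => Real.exp (-t) / t) volume a x := by
    rw [intervalIntegrable_iff_integrableOn_Ioc_of_le hax.le]
    exact (E1_integrableOn ha).mono_set Ioc_subset_Ioi_self
  have hmeas : StronglyMeasurableAtFilter (fun t => Real.exp (-t) / t) (nhds x) volume := by
    refine ⟨Ioi a, Ioi_mem_nhds hax, ?_⟩
    exact (E1_integrableOn ha).aestronglyMeasurable
  have hF : HasDerivAt (fun y => E1 a - ∫ t in a..y, Real.exp (-t) / t)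
      (-(Real.exp (-x) / x)) x :=
    (intervalIntegral.integral_hasDerivAt_right hint hmeas hcont).const_sub (E1 a)
  refine hF.congr_of_eventuallyEq ?_
  filter_upwards [Ioi_mem_nhds hax] with y hy
  exact E1_split ha (le_of_lt hy)
open FormalMultilinearSeries in
lemma hasFPowerSeriesOnBall_of_hasSum (c : ℕ → ℝ) (g : ℝ → ℝ)
    (hc : ∀ x : ℝ, |x| < 1 → HasSum (fun n => c n * x ^ n) (g x)) :
    HasFPowerSeriesOnBall g (ofScalars ℝ c) 0 1 where
  r_le := by
    refine ENNReal.le_of_forall_nnreal_lt fun r hr => ?_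
    apply FormalMultilinearSeries.le_radius_of_summable
    have hr1 : |(r : ℝ)| < 1 := by
      rw [abs_of_nonneg r.coe_nonneg, ← NNReal.coe_one, NNReal.coe_lt_coe]
      exact_mod_cast hr
    have hs : Summable fun n => |c n * (r : ℝ) ^ n| := (hc r hr1).summable.abs
    refine hs.congr fun n => ?_
    rw [abs_mul, abs_pow, abs_of_nonneg r.coe_nonneg, ofScalars_norm, Real.norm_eq_abs]
  r_pos := one_pos
  hasSum := by
    intro y hy
    rw [mem_emetric_ball_zero_iff] at hy
    have hy1 : |y| < 1 := by
      rw [← Real.norm_eq_abs, ← NNReal.coe_one, ← coe_nnnorm, NNReal.coe_lt_coe]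
      exact_mod_cast (enorm_lt_coe (r := 1)).mp hy
    simpa only [FormalMultilinearSeries.ofScalars_apply_eq, smul_eq_mul, zero_add] using hc y hy1

lemma coeff_eq_zero_of_hasSum_zero (c : ℕ → ℝ)
    (hc : ∀ x : ℝ, |x| < 1 → HasSum (fun n => c n * x ^ n) 0) (n : ℕ) : c n = 0 := by
  have h : HasFPowerSeriesOnBall (0 : ℝ → ℝ) (FormalMultilinearSeries.ofScalars ℝ c) 0 1 :=
    hasFPowerSeriesOnBall_of_hasSum c 0 (by simpa using hc)
  have h2 := h.hasFPowerSeriesAt.eq_zero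
  rw [FormalMultilinearSeries.ofScalars_series_eq_zero] at h2
  exact congrFun h2 n

def shf (f : ℕ → ℝ) : ℕ → ℝ
  | 0 => 0
  | n + 1 => f n

lemma HasSum.shf' {f : ℕ → ℝ} {a : ℝ} (h : HasSum f a) : HasSum (shf f) a := by
  refine (hasSum_nat_add_iff' (f := shf f) 1).mp ?_
  simpa [shf] using h

def qseq (b : ℕ → ℝ) : ℕ → ℝ
  | 0 => 0
  | 1 => b 1 - b 0 + 1
  | 2 => 2 * b 2 - 3 * b 1 - 1
  | (n+3) => ((n:ℝ)+3) * b (n+3) - (2*((n:ℝ)+3)-1) * b (n+2) + ((n:ℝ)+1) * b (n+1)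

/-- The Maclaurin coefficients `b n` of `f₁(z) = exp(1/(1-z)) E₁(1/(1-z))` satisfy
`n·bₙ - (2n-1)·bₙ₋₁ + (n-2)·bₙ₋₂ = 0` for `n ≥ 3`, and `2·b₂ - 3·b₁ + 0·b₀ = 1`. -/
theorem stmt_7 (b : ℕ → ℝ)
    (hb : ∀ x : ℝ, |x| < 1 → HasSum (fun n => b n * x ^ n)
      (Real.exp (1 / (1 - x)) * E1 (1 / (1 - x)))) :
    (∀ n : ℕ, 3 ≤ n →
      (n : ℝ) * b n - (2 * n - 1) * b (n - 1) + ((n : ℝ) - 2) * b (n - 2) = 0) ∧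
    2 * b 2 - 3 * b 1 + 0 * b 0 = 1 := by
  set g : ℝ → ℝ := fun x => Real.exp (1 / (1 - x)) * E1 (1 / (1 - x)) with hg_def
  have hp : HasFPowerSeriesOnBall g (FormalMultilinearSeries.ofScalars ℝ b) 0 1 :=
    hasFPowerSeriesOnBall_of_hasSum b g hb
  have hd := hp.fderiv
  have key : ∀ n, qseq b n = 0 := by
    refine coeff_eq_zero_of_hasSum_zero _ (fun x hx => ?_)
    obtain ⟨hx1, hx2⟩ := abs_lt.mp hx
    have h1x : (0:ℝ) < 1 - x := by linarith
    have h1x' : (1:ℝ) - x ≠ 0 := h1x.ne'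
    have hu : (0:ℝ) < (1 - x)⁻¹ := by positivity
    -- derivative of g
    have hlin : HasDerivAt (fun y : ℝ => 1 - y) (-1) x := (hasDerivAt_id x).const_sub 1
    have hinv : HasDerivAt (fun y : ℝ => (1 - y)⁻¹) (-(-1) / (1-x)^2) x := hlin.inv h1x'
    have hexp : HasDerivAt (fun y : ℝ => Real.exp ((1 - y)⁻¹))
        (Real.exp ((1-x)⁻¹) * (-(-1) / (1-x)^2)) x := hinv.exp
    have hE1c : HasDerivAt (fun y : ℝ => E1 ((1 - y)⁻¹))
        (-(Real.exp (-(1-x)⁻¹) / (1-x)⁻¹) * (-(-1) / (1-x)^2)) x :=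
      ((E1_hasDerivAt hu).comp x hinv :)
    set Dx : ℝ := (g x - (1 - x)) / (1-x)^2 with hDx_def
    have hgd : HasDerivAt g Dx x := by
      have h := hexp.mul hE1c
      have heq : (fun y : ℝ => Real.exp ((1 - y)⁻¹) * E1 ((1 - y)⁻¹)) = g := by
        funext y; simp [hg_def, one_div]
      change HasDerivAt (fun y : ℝ => Real.exp ((1 - y)⁻¹) * E1 ((1 - y)⁻¹)) _ x at h
      rw [heq] at h
      convert h using 1
      rw [hDx_def, hg_def]
      simp only [one_div]
      rw [Real.exp_neg]
      field_simp
      ring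
    -- HasSum for x * deriv
    have hx' : x ∈ Metric.eball (0:ℝ) 1 := by
      rw [mem_emetric_ball_zero_iff, enorm_eq_nnnorm, ← ENNReal.coe_one, ENNReal.coe_lt_coe,
        ← NNReal.coe_lt_coe, coe_nnnorm, Real.norm_eq_abs, NNReal.coe_one]
      exact hx
    have hsum2 := ((hd.hasSum hx').mapL (ContinuousLinearMap.apply ℝ ℝ x))
    have hT : HasSum (fun n : ℕ => ((n:ℝ)+1) * (b (n+1) * x^(n+1))) (x * Dx) := by
      convert hsum2 using 1
      · rfl
      · funext n
        rw [ContinuousLinearMap.apply_apply, FormalMultilinearSeries.derivSeries_apply_diag,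
          FormalMultilinearSeries.ofScalars_apply_eq, smul_eq_mul, nsmul_eq_mul]
        push_cast
        ring
      · rw [ContinuousLinearMap.apply_apply, zero_add, hgd.hasFDerivAt.fderiv]
        simp [smul_eq_mul, mul_comm]
    have hT' : HasSum (fun n : ℕ => (n:ℝ) * b n * x^n) (x * Dx) := by
      refine (hasSum_nat_add_iff' (f := fun n : ℕ => (n:ℝ) * b n * x^n) 1).mp ?_
      convert hT using 1
      · rfl
      · funext n; push_cast; ring
      · simp
    have hS : HasSum (fun n => b n * x^n) (g x) := hb x hx
    have he : HasSum (fun n => if n = 1 then x else if n = 2 then -(x^2) else (0:ℝ))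
        (x - x^2) := by
      have hsum := hasSum_sum_of_ne_finset_zero (s := ({1,2} : Finset ℕ))
        (f := fun n => if n = 1 then x else if n = 2 then -(x^2) else (0:ℝ)) (L := SummationFilter.unconditional ℕ)
        (by intro m hm; simp only [Finset.mem_insert, Finset.mem_singleton] at hm
            push_neg at hm
            simp [hm.1, hm.2])
      convert hsum using 1
      rw [Finset.sum_pair (by norm_num)]
      norm_num
      ring
    have hcomb := ((((hT'.sub (((hT'.mul_right x).shf').mul_left 2)).add
        ((hT'.mul_right (x^2)).shf'.shf')).sub ((hS.mul_right x).shf')).add he)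
    have hmain : HasSum (fun n => qseq b n * x^n) 0 := by
      convert hcomb using 1
      · rfl
      · funext n
        rcases n with _ | _ | _ | n <;>
          · simp only [qseq, shf]
            push_cast
            norm_num
            try ring
      · rw [hDx_def]
        field_simp
        ring
    exact hmain
  constructor
  · intro n hn
    obtain ⟨m, rfl⟩ : ∃ m, n = m + 3 := ⟨n - 3, (Nat.sub_add_cancel hn).symm⟩
    have h := key (m + 3)
    simp only [qseq] at h
    have e1 : m + 3 - 1 = m + 2 := rfl
    have e2 : m + 3 - 2 = m + 1 := rfl
    rw [e1, e2]
    push_cast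

    linarith
  · have h := key 2
    simp only [qseq] at h
    linarith
end

section
/- Define r_0 = 1 and, for k ≥ 1, k·r_k = ∑_{j=0}^{k-1} β_{j,k} r_j, where β_{j,k} = 8^{2k-2j-1} α_{j,k} and α_{j,k} = (-1 + 3·2^{m-1} - 2·3^m)(τ)_{m-1}/(m-1)! + (7 - 17·2^m + 17·3^m)(τ)_m/m! + (-13 + 38·2^m - 33·3^m)(τ)_{m+1}/(m+1)! + 6(1 - 4·2^m + 3·3^m)(τ)_{m+2}/(m+2)!, with m = k - j and τ = j + 1/2. Then k!·r_k is an integer for every k ≥ 0. -/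
/-- `α_{j,k}` from Corollary `explicit_dn2`: with `m = k - j` and `τ = j + 1/2`,
`α_{j,k} = (-1 + 3·2^{m-1} - 2·3^m)(τ)_{m-1}/(m-1)! + (7 - 17·2^m + 17·3^m)(τ)_m/m!
 + (-13 + 38·2^m - 33·3^m)(τ)_{m+1}/(m+1)! + 6(1 - 4·2^m + 3·3^m)(τ)_{m+2}/(m+2)!`. -/
noncomputable def alphaJK (j k : ℕ) : ℚ :=
  let m : ℕ := k - j
  let τ : ℚ := (j : ℚ) + 1 / 2
  (-1 + 3 * 2 ^ (m - 1) - 2 * 3 ^ m) * (ascPochhammer ℚ (m - 1)).eval τ / ((m - 1).factorial : ℚ)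
  + (7 - 17 * 2 ^ m + 17 * 3 ^ m) * (ascPochhammer ℚ m).eval τ / (m.factorial : ℚ)
  + (-13 + 38 * 2 ^ m - 33 * 3 ^ m) * (ascPochhammer ℚ (m + 1)).eval τ / ((m + 1).factorial : ℚ)
  + 6 * (1 - 4 * 2 ^ m + 3 * 3 ^ m) * (ascPochhammer ℚ (m + 2)).eval τ / ((m + 2).factorial : ℚ)

/-- `β_{j,k} = 8^{2k-2j-1} α_{j,k}`. -/
noncomputable def betaJK (j k : ℕ) : ℚ := 8 ^ (2 * k - 2 * j - 1) * alphaJK j k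

/-- `(τ)_ℓ / ℓ!`. -/
noncomputable def Qp (τ : ℚ) (ℓ : ℕ) : ℚ := (ascPochhammer ℚ ℓ).eval τ / (ℓ.factorial : ℚ)

lemma Qp_succ_right (τ : ℚ) (n : ℕ) :
    Qp τ (n+1) * ((n:ℚ)+1) = Qp τ n * (τ + n) := by
  have h : (n.factorial : ℚ) ≠ 0 := by exact_mod_cast n.factorial_ne_zero
  have hn : ((n:ℚ)+1) ≠ 0 := by positivity
  simp only [Qp, ascPochhammer_succ_eval, Nat.factorial_succ]
  push_cast
  field_simp

lemma Qp_succ_left (τ : ℚ) (n : ℕ) :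
    Qp τ (n+1) * ((n:ℚ)+1) = τ * Qp (τ+1) n := by
  have h : (n.factorial : ℚ) ≠ 0 := by exact_mod_cast n.factorial_ne_zero
  have hn : ((n:ℚ)+1) ≠ 0 := by positivity
  simp only [Qp, ascPochhammer_succ_left, Polynomial.eval_mul, Polynomial.eval_X,
    Polynomial.eval_comp, Polynomial.eval_add, Polynomial.eval_one, Nat.factorial_succ]
  push_cast
  field_simp

lemma hockey (τ : ℚ) (ℓ : ℕ) :
    ∑ i ∈ Finset.range (ℓ+1), Qp τ i = Qp (τ+1) ℓ := by
  induction ℓ with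
  | zero => simp [Qp]
  | succ n ih =>
      rw [Finset.sum_range_succ, ih]
      have hn : ((n:ℚ)+1) ≠ 0 := by positivity
      have h1 := Qp_succ_right (τ+1) n
      have h2 := Qp_succ_left τ n
      apply mul_right_cancel₀ hn
      linear_combination h2 - h1

lemma base_int (ℓ : ℕ) : (4:ℚ)^ℓ * Qp (1/2) ℓ = (Nat.centralBinom ℓ : ℚ) := by
  induction ℓ with
  | zero => simp [Qp, Nat.centralBinom]
  | succ n ih =>
      have h := Nat.succ_mul_centralBinom_succ n
      have h' : ((n:ℚ)+1) * (Nat.centralBinom (n+1) : ℚ)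
          = 2 * (2*(n:ℚ)+1) * (Nat.centralBinom n : ℚ) := by exact_mod_cast h
      have hn : ((n:ℚ)+1) ≠ 0 := by positivity
      have hQ := Qp_succ_right (1/2) n
      apply mul_right_cancel₀ hn
      have h4 : (4:ℚ)^(n+1) = 4 * 4^n := by ring
      rw [h4]
      linear_combination 4 * (4:ℚ)^n * hQ + (4*(n:ℚ)+2) * ih - h'

lemma int4 (j ℓ : ℕ) : (4:ℚ)^ℓ * Qp ((j:ℚ)+1/2) ℓ ∈ (⊥ : Subring ℚ) := by
  induction j generalizing ℓ with
  | zero =>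
      rw [show ((0:ℕ):ℚ) + 1/2 = 1/2 by norm_num, base_int]
      exact Subring.mem_bot.mpr ⟨Nat.centralBinom ℓ, by push_cast; ring⟩
  | succ n ih =>
      have hh := hockey ((n:ℚ)+1/2) ℓ
      have key : (4:ℚ)^ℓ * Qp (((n+1:ℕ):ℚ)+1/2) ℓ
          = ∑ i ∈ Finset.range (ℓ+1), (4:ℚ)^(ℓ-i) * ((4:ℚ)^i * Qp ((n:ℚ)+1/2) i) := by
        rw [show (((n+1:ℕ):ℚ)+1/2) = ((n:ℚ)+1/2)+1 by push_cast; ring, ← hh,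
          Finset.mul_sum]
        refine Finset.sum_congr rfl fun i hi => ?_
        have hi' : i ≤ ℓ := by
          have := Finset.mem_range.mp hi; omega
        rw [← mul_assoc, ← pow_add]
        congr 2
        omega
      rw [key]
      exact Subring.sum_mem _ fun i _ =>
        Subring.mul_mem _ (Subring.pow_mem _ (Subring.mem_bot.mpr ⟨4, by norm_num⟩) _) (ih i)

lemma int2 (j ℓ e : ℕ) (h : 2*ℓ ≤ e) :
    (2:ℚ)^e * Qp ((j:ℚ)+1/2) ℓ ∈ (⊥ : Subring ℚ) := by
  have h2 : (2:ℚ)^e = (2:ℚ)^(e-2*ℓ) * (4:ℚ)^ℓ := by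
    rw [show (4:ℚ) = 2^2 by norm_num, ← pow_mul, ← pow_add]
    congr 1; omega
  rw [h2, mul_assoc]
  exact Subring.mul_mem _ (Subring.pow_mem _ (Subring.mem_bot.mpr ⟨2, by norm_num⟩) _) (int4 j ℓ)

lemma beta_one (j : ℕ) : betaJK j (j+1)
    = ((-32 + 96*(2*(j:ℤ)+1) - 36*((2*j+1)*(2*j+3)) + 2*((2*j+1)*(2*j+3)*(2*j+5)) : ℤ) : ℚ) := by
  simp only [betaJK, alphaJK, Nat.add_sub_cancel_left]
  rw [show 2*(j+1)-2*j-1 = 1 from by omega]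
  norm_num [ascPochhammer_succ_eval, ascPochhammer_one, Nat.factorial]
  ring

lemma beta_mem (j m : ℕ) (hm : 2 ≤ m) : betaJK j (j+m) ∈ (⊥ : Subring ℚ) := by
  set τ : ℚ := (j:ℚ) + 1/2 with hτ
  have h8 : (8:ℚ)^(2*(j+m)-2*j-1) = 2^(6*m-3) := by
    rw [show (8:ℚ) = 2^3 by norm_num, ← pow_mul]
    congr 1; omega
  have key : betaJK j (j+m)
      = (-1 + 3 * 2 ^ (m - 1) - 2 * 3 ^ m) * ((2:ℚ)^(6*m-3) * Qp τ (m-1))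
      + (7 - 17 * 2 ^ m + 17 * 3 ^ m) * ((2:ℚ)^(6*m-3) * Qp τ m)
      + (-13 + 38 * 2 ^ m - 33 * 3 ^ m) * ((2:ℚ)^(6*m-3) * Qp τ (m+1))
      + 6 * (1 - 4 * 2 ^ m + 3 * 3 ^ m) * ((2:ℚ)^(6*m-3) * Qp τ (m+2)) := by
    simp only [betaJK, alphaJK, Qp, Nat.add_sub_cancel_left, h8]
    ring
  rw [key]
  have c1 : (-1 + 3 * 2 ^ (m-1) - 2 * 3 ^ m : ℚ) ∈ (⊥ : Subring ℚ) :=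
    Subring.mem_bot.mpr ⟨-1 + 3 * 2 ^ (m-1) - 2 * 3 ^ m, by push_cast; ring⟩
  have c2 : (7 - 17 * 2 ^ m + 17 * 3 ^ m : ℚ) ∈ (⊥ : Subring ℚ) :=
    Subring.mem_bot.mpr ⟨7 - 17 * 2 ^ m + 17 * 3 ^ m, by push_cast; ring⟩
  have c3 : (-13 + 38 * 2 ^ m - 33 * 3 ^ m : ℚ) ∈ (⊥ : Subring ℚ) :=
    Subring.mem_bot.mpr ⟨-13 + 38 * 2 ^ m - 33 * 3 ^ m, by push_cast; ring⟩
  have c4 : (6 * (1 - 4 * 2 ^ m + 3 * 3 ^ m) : ℚ) ∈ (⊥ : Subring ℚ) :=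
    Subring.mem_bot.mpr ⟨6 * (1 - 4 * 2 ^ m + 3 * 3 ^ m), by push_cast; ring⟩
  refine Subring.add_mem _ (Subring.add_mem _ (Subring.add_mem _ ?_ ?_) ?_) ?_
  · exact Subring.mul_mem _ c1 (int2 j (m-1) _ (by omega))
  · exact Subring.mul_mem _ c2 (int2 j m _ (by omega))
  · exact Subring.mul_mem _ c3 (int2 j (m+1) _ (by omega))
  · exact Subring.mul_mem _ c4 (int2 j (m+2) _ (by omega))

lemma beta_mem' (j k : ℕ) (h : j < k) : betaJK j k ∈ (⊥ : Subring ℚ) := by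
  rcases Nat.exists_eq_add_of_lt h with ⟨m, rfl⟩
  rcases Nat.eq_zero_or_pos m with rfl | hm
  · rw [show j + 0 + 1 = j + 1 by ring, beta_one]
    exact Subring.mem_bot.mpr ⟨_, rfl⟩
  · rw [show j + m + 1 = j + (m+1) by ring]
    exact beta_mem j (m+1) (by omega)

/-- If `r₀ = 1` and `k·r_k = ∑_{j<k} β_{j,k} r_j` for `k ≥ 1`, then `k!·r_k ∈ ℤ`
for every `k ≥ 0`. -/
theorem stmt_18 (r : ℕ → ℚ)
    (hr0 : r 0 = 1)
    (hrec : ∀ k : ℕ, 1 ≤ k → (k : ℚ) * r k = ∑ j ∈ Finset.range k, betaJK j k * r j) :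
    ∀ k : ℕ, ∃ m : ℤ, (k.factorial : ℚ) * r k = (m : ℚ) := by
  have main : ∀ k : ℕ, (k.factorial : ℚ) * r k ∈ (⊥ : Subring ℚ) := by
    intro k
    induction k using Nat.strong_induction_on with
    | _ k ih =>
      match k with
      | 0 =>
          rw [hr0]
          exact Subring.mem_bot.mpr ⟨1, by norm_num⟩
      | (n+1) =>
          have hrec' := hrec (n+1) (by omega)
          have key : ((n+1).factorial : ℚ) * r (n+1)
              = ∑ j ∈ Finset.range (n+1),
                  ((n.factorial / j.factorial : ℕ) : ℚ) * betaJK j (n+1)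
                    * ((j.factorial : ℚ) * r j) := by
            have h1 : ((n+1).factorial : ℚ) * r (n+1)
                = (n.factorial : ℚ) * (((n+1 : ℕ) : ℚ) * r (n+1)) := by
              rw [Nat.factorial_succ]
              push_cast
              ring
            rw [h1, hrec', Finset.mul_sum]
            refine Finset.sum_congr rfl fun j hj => ?_
            have hj' : j ≤ n := by
              have := Finset.mem_range.mp hj; omega
            have hdvd : j.factorial ∣ n.factorial :=
              Nat.factorial_dvd_factorial hj'
            have h2 : ((n.factorial / j.factorial : ℕ) : ℚ) * (j.factorial : ℚ)
                = (n.factorial : ℚ) := by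
              rw [← Nat.cast_mul, Nat.div_mul_cancel hdvd]
            linear_combination -betaJK j (n+1) * r j * h2
          rw [key]
          exact Subring.sum_mem _ fun j hj =>
            Subring.mul_mem _
              (Subring.mul_mem _ (Subring.mem_bot.mpr ⟨((n.factorial / j.factorial : ℕ) : ℤ), by norm_cast⟩)
                (beta_mem' j (n+1) (Finset.mem_range.mp hj)))
              (ih j (by have := Finset.mem_range.mp hj; omega))
  intro k
  obtain ⟨m, hm⟩ := Subring.mem_bot.mp (main k)
  exact ⟨m, hm.symm⟩
end

section
/- With β_{j,k} as defined (β_{j,k} = 8^{2k-2j-1} α_{j,k}, where α_{j,k} is the four-term expression in Pochhammer symbols with m = k-j ≥ 1 and τ = j+1/2), every β_{j,k} for 0 ≤ j < k is an even integer. -/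
/-- Integer version of `4^ℓ (τ)_ℓ / ℓ!` with `τ = j + 1/2`. -/
def cJ : ℕ → ℕ → ℕ
  | 0, l => (2 * l).choose l
  | _ + 1, 0 => 1
  | j + 1, l + 1 => cJ j (l + 1) + 4 * cJ (j + 1) l

theorem cJ_fact : ∀ j l : ℕ,
    (((2*j).factorial : ℚ) * (j+l).factorial * l.factorial) * (cJ j l)
      = ((2*j+2*l).factorial : ℚ) * j.factorial
  | 0, l => by
      have h := Nat.choose_mul_factorial_mul_factorial (Nat.le_mul_of_pos_left l (by norm_num : 0 < 2))
      have h' : (((2*l).choose l : ℚ)) * l.factorial * l.factorial = (2*l).factorial := by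
        rw [show 2*l - l = l from by omega] at h
        exact_mod_cast h
      simp only [cJ, Nat.mul_zero, Nat.zero_add, Nat.factorial_zero]
      push_cast
      linear_combination h'
  | j + 1, 0 => by simp [cJ]
  | j + 1, l + 1 => by
      have h1 := cJ_fact j (l+1)
      have h2 := cJ_fact (j+1) l
      have hA : ((2*(j+1)).factorial : ℚ) = (2*j+2)*((2*j+1)*(2*j).factorial) := by
        rw [show 2*(j+1) = (2*j+1)+1 from by ring, Nat.factorial_succ, Nat.factorial_succ]
        push_cast; ring
      have hB : ((j+1+(l+1)).factorial : ℚ) = (j+l+2)*(j+(l+1)).factorial := by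
        rw [show j+1+(l+1) = (j+(l+1))+1 from by ring, Nat.factorial_succ]
        push_cast; ring
      have hC : (((l+1)).factorial : ℚ) = (l+1)*l.factorial := by
        rw [Nat.factorial_succ]; push_cast; ring
      have hD : ((2*(j+1)+2*(l+1)).factorial : ℚ)
          = (2*j+2*l+4)*((2*j+2*l+3)*(2*j+2*(l+1)).factorial) := by
        rw [show 2*(j+1)+2*(l+1) = ((2*j+2*(l+1))+1)+1 from by ring, Nat.factorial_succ,
          Nat.factorial_succ]
        push_cast; ring
      have hE : (((j+1)).factorial : ℚ) = (j+1)*j.factorial := by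
        rw [Nat.factorial_succ]; push_cast; ring
      rw [show (j+1+l) = j+(l+1) from by ring,
        show 2*(j+1)+2*l = (2*j+2*(l+1)) from by ring, hA, hE] at h2
      rw [hC] at h1
      simp only [cJ]
      rw [hA, hB, hC, hD, hE]
      push_cast
      linear_combination ((2*j+2)*(2*j+1)*((j:ℚ)+l+2)) * h1 + (4*((j:ℚ)+l+2)*(l+1)) * h2

theorem poch_fact (j : ℕ) : ∀ l : ℕ,
    (((2*j).factorial : ℚ) * (j+l).factorial * 4^l) * (ascPochhammer ℚ l).eval ((j:ℚ)+1/2)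
      = ((2*j+2*l).factorial : ℚ) * j.factorial := by
  intro l
  induction l with
  | zero => simp
  | succ n ih =>
      rw [ascPochhammer_succ_eval]
      have hB : ((j+(n+1)).factorial : ℚ) = (j+n+1)*(j+n).factorial := by
        rw [show j+(n+1) = (j+n)+1 from by ring, Nat.factorial_succ]; push_cast; ring
      have hD : ((2*j+2*(n+1)).factorial : ℚ)
          = (2*j+2*n+2)*((2*j+2*n+1)*(2*j+2*n).factorial) := by
        rw [show 2*j+2*(n+1) = ((2*j+2*n)+1)+1 from by ring, Nat.factorial_succ, Nat.factorial_succ]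
        push_cast; ring
      rw [hB, hD, pow_succ]
      linear_combination (4*((j:ℚ)+n+1)*((j:ℚ)+1/2+n)) * ih

theorem poch_eq_c (j l : ℕ) :
    (ascPochhammer ℚ l).eval ((j:ℚ)+1/2) = (cJ j l : ℚ) * l.factorial / 4^l := by
  have h1 := poch_fact j l
  have h2 := cJ_fact j l
  have hne : (((2*j).factorial : ℚ) * (j+l).factorial) ≠ 0 := by positivity
  have h4 : ((4:ℚ)^l) ≠ 0 := by positivity
  have key : (((2*j).factorial : ℚ) * (j+l).factorial) *
      ((4:ℚ)^l * (ascPochhammer ℚ l).eval ((j:ℚ)+1/2))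
      = (((2*j).factorial : ℚ) * (j+l).factorial) * ((l.factorial : ℚ) * (cJ j l)) := by
    rw [← h2] at h1; linear_combination h1
  have key2 := mul_left_cancel₀ hne key
  rw [eq_div_iff h4]
  linear_combination key2

/-- Every `β_{j,k}` with `0 ≤ j < k` is an even integer. -/
theorem stmt_19 : ∀ j k : ℕ, j < k → ∃ m : ℤ, betaJK j k = 2 * (m : ℚ) := by
  intro j k hjk
  obtain ⟨n, rfl⟩ : ∃ n, k = j + n + 1 := ⟨k - j - 1, by omega⟩
  cases n with
  | zero =>
      refine ⟨8*(j:ℤ)^3 - 36*(j:ℤ)^2 - 2*(j:ℤ) - 7, ?_⟩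
      have e1 : ∀ x : ℚ, (ascPochhammer ℚ 1).eval x = x := by
        intro x; simp
      have e2 : ∀ x : ℚ, (ascPochhammer ℚ 2).eval x = x*(x+1) := by
        intro x
        rw [show (2:ℕ) = 1+1 from rfl, ascPochhammer_succ_eval, ascPochhammer_one]
        simp [Polynomial.eval_X]; try ring
      have e3 : ∀ x : ℚ, (ascPochhammer ℚ 3).eval x = x*(x+1)*(x+2) := by
        intro x
        rw [show (3:ℕ) = 2+1 from rfl, ascPochhammer_succ_eval]
        rw [show (2:ℕ) = 1+1 from rfl, ascPochhammer_succ_eval, ascPochhammer_one]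
        simp [Polynomial.eval_X]; try ring
      unfold betaJK alphaJK
      dsimp only
      rw [show (j+0+1) - j = 1 from by omega, show 2*(j+0+1)-2*j-1 = 1 from by omega]
      norm_num [e1, e2, e3, Nat.factorial]
      ring
  | succ s =>
      refine ⟨2^(4*s) * (64 * (-1 + 3*2^(s+1) - 2*3^(s+2)) * cJ j (s+1)
        + 16 * (7 - 17*2^(s+2) + 17*3^(s+2)) * cJ j (s+2)
        + 4 * (-13 + 38*2^(s+2) - 33*3^(s+2)) * cJ j (s+3)
        + 6 * (1 - 4*2^(s+2) + 3*3^(s+2)) * cJ j (s+4)), ?_⟩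
      unfold betaJK alphaJK
      dsimp only
      rw [show (j+(s+1)+1) - j = s+2 from by omega,
        show 2*(j+(s+1)+1)-2*j-1 = 2*s+3 from by omega,
        show (s+2) - 1 = s+1 from by omega, show (s+2)+1 = s+3 from rfl,
        show (s+2)+2 = s+4 from rfl]
      rw [poch_eq_c j (s+1), poch_eq_c j (s+2), poch_eq_c j (s+3), poch_eq_c j (s+4)]
      have f1 : ((s+1).factorial : ℚ) ≠ 0 := by positivity
      have f2 : ((s+2).factorial : ℚ) ≠ 0 := by positivity
      have f3 : ((s+3).factorial : ℚ) ≠ 0 := by positivity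
      have f4 : ((s+4).factorial : ℚ) ≠ 0 := by positivity
      push_cast
      rw [show (8:ℚ) = 2^3 from by norm_num, show (4:ℚ) = 2^2 from by norm_num, ← pow_mul,
        ← pow_mul, ← pow_mul, ← pow_mul, ← pow_mul]
      field_simp
      ring
end
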